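/- Let n = 4k, let a_1 be a nonsquare in F_{3^n}, and define a_2 as in (the binomial construction): a_2 = ± I^k a_1^{(3^k+1)/2}((-1)^k a_1^{(3^k-1)(3^{2k}+1)/4} + a_1^{-(3^k-1)(3^{2k}+1)/4}) with I a primitive 4th root of unity. Then a_2 is also a nonsquare in F_{3^n}. -/

import Mathlib

private lemma three_pow_mod_four (k : ℕ) : 3 ^ k % 4 = 2 * (k % 2) + 1 := by
  induction k with
  | zero => simp
  | succ k ih =>
    have h : 3 ^ (k + 1) = 3 * 3 ^ k := by ring
    omega

private lemma neg_one_pow_congr_mod {F : Type*} [Ring F] {a b : ℕ}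
    (h : a % 2 = b % 2) : (-1 : F) ^ a = (-1 : F) ^ b := by
  rw [neg_one_pow_eq_pow_mod_two, h, ← neg_one_pow_eq_pow_mod_two]

theorem a2_is_nonsquare
    (k : ℕ) (hk : 0 < k) (n : ℕ) (hn : n = 4 * k)
    (F : Type*) [Field F] [Fintype F] (hF : Fintype.card F = 3 ^ n)
    (a₁ : F) (ha₁ : a₁ ^ ((3 ^ n - 1) / 2) = -1)
    (I : F) (hI : orderOf I = 4)
    (ε : F) (hε : ε = 1 ∨ ε = -1)
    (a₂ : F)
    (ha₂ : a₂ = ε * I ^ k * a₁ ^ ((3 ^ k + 1) / 2) *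
      ((-1 : F) ^ k * a₁ ^ ((3 ^ k - 1) * (3 ^ (2 * k) + 1) / 4) +
        (a₁ ^ ((3 ^ k - 1) * (3 ^ (2 * k) + 1) / 4))⁻¹))
    (ha₂0 : a₂ ≠ 0) :
    a₂ ^ ((3 ^ n - 1) / 2) = -1 := by
  -- characteristic 3
  haveI hchar : CharP F 3 := by
    obtain ⟨m, hp, hcard⟩ := FiniteField.card F (ringChar F)
    have h3 : ringChar F = 3 := by
      have hd : ringChar F ∣ 3 ^ n := by
        rw [← hF, hcard]
        exact dvd_pow_self _ m.2.ne'
      exact (Nat.prime_dvd_prime_iff_eq hp Nat.prime_three).mp (hp.dvd_of_dvd_pow hd)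
    exact h3 ▸ ringChar.charP F
  haveI : Fact (Nat.Prime 3) := ⟨Nat.prime_three⟩
  -- write 3^k = 2t+1
  obtain ⟨t, ht⟩ : ∃ t, 3 ^ k = 2 * t + 1 := by
    obtain ⟨t, ht⟩ := (Odd.pow (n := k) (⟨1, by norm_num⟩ : Odd 3))
    exact ⟨t, by omega⟩
  have htk : t % 2 = k % 2 := by
    have h4 := three_pow_mod_four k
    omega
  have h2k' : 3 ^ (2 * k) = 4 * t ^ 2 + 4 * t + 1 := by
    rw [two_mul, pow_add, ht]; ring
  have hnk : 3 ^ n = 2 * (4 * t * (t + 1) * (2 * t ^ 2 + 2 * t + 1)) + 1 := by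
    rw [hn, show 4 * k = 2 * k + 2 * k by ring, pow_add, h2k']; ring
  have hN : (3 ^ n - 1) / 2 = 4 * t * (t + 1) * (2 * t ^ 2 + 2 * t + 1) := by
    omega
  have he1 : (3 ^ k + 1) / 2 = t + 1 := by omega
  have hm : (3 ^ k - 1) * (3 ^ (2 * k) + 1) / 4 = t * (2 * t ^ 2 + 2 * t + 1) := by
    have h1 : (3 ^ k - 1) * (3 ^ (2 * k) + 1) = 4 * (t * (2 * t ^ 2 + 2 * t + 1)) := by
      have ha : 3 ^ k - 1 = 2 * t := by omega
      rw [ha, h2k']; ring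
    rw [h1]
    exact Nat.mul_div_cancel_left _ (by norm_num)
  rw [hN] at ha₁ ⊢
  rw [he1, hm] at ha₂
  -- a₁ ≠ 0
  have ha₁0 : a₁ ≠ 0 := by
    intro h
    rw [h, zero_pow] at ha₁
    · exact one_ne_zero (neg_eq_zero.mp ha₁.symm)
    · have h3 : 3 ≤ 3 ^ k := Nat.le_self_pow hk.ne' 3
      have : 1 ≤ t := by omega
      positivity
  set u : F := a₁ ^ (t * (2 * t ^ 2 + 2 * t + 1)) with hu
  have hu0 : u ≠ 0 := pow_ne_zero _ ha₁0
  set s : F := (-1 : F) ^ k * u + u⁻¹ with hs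
  have hs0 : s ≠ 0 := by
    intro h
    apply ha₂0
    rw [ha₂, h, mul_zero]
  -- Step A : Frobenius-type action on u
  have hA : u ^ (3 ^ (2 * k)) = (-1 : F) ^ k * u := by
    rw [hu, ← pow_mul, h2k',
      show t * (2 * t ^ 2 + 2 * t + 1) * (4 * t ^ 2 + 4 * t + 1)
        = t * (2 * t ^ 2 + 2 * t + 1) + 4 * t * (t + 1) * (2 * t ^ 2 + 2 * t + 1) * t from by
        ring,
      pow_add, pow_mul a₁ (4 * t * (t + 1) * (2 * t ^ 2 + 2 * t + 1)) t, ha₁,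
      neg_one_pow_congr_mod htk, mul_comm]
  -- Step B : s^(3^(2k)) = (-1)^k * s
  have hoddE : Odd (3 ^ (2 * k)) := Odd.pow (⟨1, by norm_num⟩ : Odd 3)
  have hB : s ^ (3 ^ (2 * k)) = (-1 : F) ^ k * s := by
    rw [hs, add_pow_char_pow, mul_pow, inv_pow, hA, ← pow_mul,
      mul_comm k (3 ^ (2 * k)), pow_mul, Odd.neg_one_pow hoddE, mul_inv_rev]
    have hcinv : ((-1 : F) ^ k)⁻¹ = (-1 : F) ^ k := by
      apply inv_eq_of_mul_eq_one_right
      rw [← pow_add, show k + k = 2 * k from by ring, pow_mul, neg_one_sq, one_pow]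
    rw [hcinv]
    ring
  -- cancel one s : s^(3^(2k)-1) = (-1)^k
  have hC : s ^ (4 * t ^ 2 + 4 * t) = (-1 : F) ^ k := by
    have h := hB
    rw [h2k', pow_succ] at h
    exact mul_right_cancel₀ hs0 h
  -- s to the half-order
  have hsN : s ^ (4 * t * (t + 1) * (2 * t ^ 2 + 2 * t + 1)) = (-1 : F) ^ k := by
    rw [show 4 * t * (t + 1) * (2 * t ^ 2 + 2 * t + 1)
        = (4 * t ^ 2 + 4 * t) * (2 * t ^ 2 + 2 * t + 1) from by ring,
      pow_mul, hC, ← pow_mul]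
    apply neg_one_pow_congr_mod
    obtain ⟨c, hc⟩ : ∃ c, k * (2 * t ^ 2 + 2 * t + 1) = 2 * c + k :=
      ⟨k * (t ^ 2 + t), by ring⟩
    omega
  -- other factors
  have hIN : (I ^ k) ^ (4 * t * (t + 1) * (2 * t ^ 2 + 2 * t + 1)) = 1 := by
    rw [← pow_mul]
    apply orderOf_dvd_iff_pow_eq_one.mp
    rw [hI]
    exact ⟨k * (t * (t + 1) * (2 * t ^ 2 + 2 * t + 1)), by ring⟩
  have hεN : ε ^ (4 * t * (t + 1) * (2 * t ^ 2 + 2 * t + 1)) = 1 := by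
    rcases hε with h | h <;> rw [h]
    · exact one_pow _
    · exact Even.neg_one_pow ⟨2 * t * (t + 1) * (2 * t ^ 2 + 2 * t + 1), by ring⟩
  have ha1N : (a₁ ^ (t + 1)) ^ (4 * t * (t + 1) * (2 * t ^ 2 + 2 * t + 1))
      = (-1 : F) ^ (t + 1) := by
    rw [← pow_mul, mul_comm, pow_mul, ha₁]
  -- conclude
  rw [ha₂, mul_pow, mul_pow, mul_pow, hεN, hIN, ha1N, hsN,
    neg_one_pow_congr_mod (show (t + 1) % 2 = (k + 1) % 2 from by omega), one_mul, one_mul,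
    ← pow_add, Odd.neg_one_pow ⟨k, by ring⟩]
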